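/- arXiv:gr-qc/0110114 — 2 statements merged into one kernel-verified Lean document; each statement's English description precedes it below -/
import Mathlib

section
/- Let k₁ ≥ 1 be real and let s₁₂, s₂, p₁, p₂ be real. Then the complex-valued function t ↦ t^{k₁ - 1 - i p₁} · (1-t)^{-i s₁₂ - 1/2 + i p₁ + i p₂} · ₂F₁(k₁-i s₁₂-i s₂, k₁-i s₁₂+i s₂; 2k₁; t) is integrable with respect to Lebesgue measure on (0,1/2), and the function t ↦ t^{k₁ - 1 - i p₁} · (1-t)^{i s₁₂ - 1/2 + i p₁ + i p₂} · ₂F₁(k₁+i s₁₂+i s₂, k₁+i s₁₂-i s₂; 1+2i s₁₂; 1-t) is integrable with respect to Lebesgue measure on (1/2,1). (Convergence of the two pieces of the integral I₁(+,C,C) for the coupling of a positive discrete series with a continuous series to a continuous series.) -/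
open Complex Filter Set MeasureTheory Polynomial

/-- The `n`-th term of the Gauss hypergeometric series `₂F₁(a,b;c;z)`. -/
noncomputable def hypTerm (a b c z : ℂ) (n : ℕ) : ℂ :=
  (ascPochhammer ℂ n).eval a * (ascPochhammer ℂ n).eval b /
    ((ascPochhammer ℂ n).eval c * (n.factorial : ℂ)) * z ^ n

/-- The Gauss hypergeometric function `₂F₁(a,b;c;z)`. -/
noncomputable def hyp (a b c z : ℂ) : ℂ := ∑' n, hypTerm a b c z n


lemma poch_nonneg (x : ℝ) (hx : 0 ≤ x) (n : ℕ) : 0 ≤ (ascPochhammer ℝ n).eval x := by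
  induction n with
  | zero => simp
  | succ n ih =>
    rw [ascPochhammer_succ_right]
    simp only [eval_mul, eval_add, eval_X, eval_natCast]
    exact mul_nonneg ih (by positivity)

lemma abs_poch_le (a : ℂ) (n : ℕ) :
    ‖(ascPochhammer ℂ n).eval a‖ ≤ (ascPochhammer ℝ n).eval ‖a‖ := by
  induction n with
  | zero => simp
  | succ n ih =>
    rw [ascPochhammer_succ_right, ascPochhammer_succ_right]
    simp only [eval_mul, eval_add, eval_X, eval_natCast, norm_mul]
    refine mul_le_mul ih ?_ (norm_nonneg _) ((norm_nonneg _).trans ih)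
    calc ‖a + (n : ℂ)‖ ≤ ‖a‖ + ‖(n : ℂ)‖ := norm_add_le _ _
      _ = ‖a‖ + n := by simp

lemma le_abs_poch (c : ℂ) (hc : 0 < c.re) (n : ℕ) :
    (ascPochhammer ℝ n).eval c.re ≤ ‖(ascPochhammer ℂ n).eval c‖ := by
  induction n with
  | zero => simp
  | succ n ih =>
    rw [ascPochhammer_succ_right, ascPochhammer_succ_right]
    simp only [eval_mul, eval_add, eval_X, eval_natCast, norm_mul]
    refine mul_le_mul ih ?_ (by positivity) (norm_nonneg _)
    calc c.re + (n : ℝ) = (c + (n : ℂ)).re := by simp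
      _ ≤ ‖c + (n : ℂ)‖ := Complex.re_le_norm _
      _ = ‖c + (n : ℂ)‖ := rfl

lemma poch_pos (x : ℝ) (hx : 0 < x) (n : ℕ) : 0 < (ascPochhammer ℝ n).eval x :=
  ascPochhammer_pos n x hx

/-- The dominating sequence. -/
noncomputable def hypBnd (a b c : ℂ) (n : ℕ) : ℝ :=
  (ascPochhammer ℝ n).eval ‖a‖ * (ascPochhammer ℝ n).eval ‖b‖ /
    ((ascPochhammer ℝ n).eval c.re * (n.factorial : ℝ)) * (1/2) ^ n

lemma hypBnd_nonneg (a b c : ℂ) (hc : 1 ≤ c.re) (n : ℕ) : 0 ≤ hypBnd a b c n := by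
  have h1 := poch_nonneg ‖a‖ (norm_nonneg _) n
  have h2 := poch_nonneg ‖b‖ (norm_nonneg _) n
  have h3 := poch_pos c.re (by linarith) n
  have h4 : (0:ℝ) < n.factorial := by positivity
  unfold hypBnd
  positivity

lemma hypBnd_summable (a b c : ℂ) (hc : 1 ≤ c.re) : Summable (hypBnd a b c) := by
  obtain ⟨N, hN⟩ := exists_nat_ge (4 * ‖a‖ + 4 * ‖b‖)
  apply summable_of_ratio_norm_eventually_le (r := 25/32) (by norm_num)
  filter_upwards [eventually_ge_atTop N] with n hn
  have hn' : (N : ℝ) ≤ n := Nat.cast_le.2 hn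
  have ha : ‖a‖ ≤ (n:ℝ)/4 := by linarith [norm_nonneg a, norm_nonneg b]
  have hb : ‖b‖ ≤ (n:ℝ)/4 := by linarith [norm_nonneg a, norm_nonneg b]
  have h1 := poch_nonneg ‖a‖ (norm_nonneg _) n
  have h2 := poch_nonneg ‖b‖ (norm_nonneg _) n
  have h3 := poch_pos c.re (by linarith) n
  have h4 : (0:ℝ) < n.factorial := by positivity
  rw [Real.norm_of_nonneg (hypBnd_nonneg a b c hc _),
      Real.norm_of_nonneg (hypBnd_nonneg a b c hc _)]
  have key : hypBnd a b c (n+1) =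
      hypBnd a b c n * ((‖a‖ + n) * (‖b‖ + n) / ((c.re + n) * (n + 1) * 2)) := by
    unfold hypBnd
    rw [ascPochhammer_succ_right]
    simp only [eval_mul, eval_add, eval_X, eval_natCast, Nat.factorial_succ,
      Nat.cast_mul, Nat.cast_add, Nat.cast_one, pow_succ]
    field_simp
  rw [key]
  have hr : (‖a‖ + n) * (‖b‖ + n) / ((c.re + n) * (n + 1) * 2) ≤ 25/32 := by
    rw [div_le_iff₀ (by positivity)]
    nlinarith [norm_nonneg a, norm_nonneg b, Nat.cast_nonneg (α := ℝ) n]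
  calc hypBnd a b c n * ((‖a‖ + n) * (‖b‖ + n) / ((c.re + n) * (n + 1) * 2))
      ≤ hypBnd a b c n * (25/32) := by
        exact mul_le_mul_of_nonneg_left hr (hypBnd_nonneg a b c hc n)
    _ = 25/32 * hypBnd a b c n := by ring

lemma hypTerm_le (a b c : ℂ) (hc : 1 ≤ c.re) (z : ℂ) (hz : ‖z‖ ≤ 1/2) (n : ℕ) :
    ‖hypTerm a b c z n‖ ≤ hypBnd a b c n := by
  have h3 := poch_pos c.re (by linarith) n
  have h4 : (0:ℝ) < n.factorial := by positivity
  have hcn : (0:ℝ) < ‖(ascPochhammer ℂ n).eval c‖ := lt_of_lt_of_le h3 (le_abs_poch c (by linarith) n)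
  have h1 := poch_nonneg ‖a‖ (norm_nonneg a) n
  have h2 := poch_nonneg ‖b‖ (norm_nonneg b) n
  unfold hypTerm hypBnd
  rw [norm_mul, norm_div, norm_mul, norm_mul, norm_pow]
  have hfac : ‖(n.factorial : ℂ)‖ = (n.factorial : ℝ) := by
    rw [Complex.norm_natCast]
  rw [hfac]
  refine mul_le_mul ?_ (pow_le_pow_left₀ (norm_nonneg _) hz n) (by positivity) ?_
  · refine div_le_div₀ (by positivity) ?_ (by positivity) ?_
    · exact mul_le_mul (abs_poch_le a n) (abs_poch_le b n) (norm_nonneg _)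
        (poch_nonneg _ (norm_nonneg _) _)
    · exact mul_le_mul_of_nonneg_right (le_abs_poch c (by linarith) n) (by positivity)
  · exact div_nonneg (mul_nonneg h1 h2) (by positivity)

lemma hyp_continuousOn (a b c : ℂ) (hc : 1 ≤ c.re) :
    ContinuousOn (hyp a b c) (Metric.closedBall (0:ℂ) (1/2)) := by
  apply continuousOn_tsum (u := hypBnd a b c)
  · intro n
    apply Continuous.continuousOn
    exact continuous_const.mul (continuous_pow n)
  · exact hypBnd_summable a b c hc
  · intro n z hz
    have : ‖z‖ ≤ 1/2 := by simpa [Metric.mem_closedBall, Complex.dist_eq] using hz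
    exact hypTerm_le a b c hc z this n

lemma hyp_bound (a b c : ℂ) (hc : 1 ≤ c.re) (z : ℂ) (hz : ‖z‖ ≤ 1/2) :
    ‖hyp a b c z‖ ≤ ∑' n, hypBnd a b c n :=
  tsum_of_norm_bounded (hypBnd_summable a b c hc).hasSum (hypTerm_le a b c hc z hz)

/-- Convergence of the two pieces of the integral `I₁(+,C,C)` for the coupling of a
positive discrete series with a continuous series to a continuous series. -/
theorem integral_PCC_I1_integrable (k₁ s₁₂ s₂ p₁ p₂ : ℝ) (h1 : 1 ≤ k₁) :
    IntegrableOn (fun t : ℝ =>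
        ((t : ℝ) : ℂ) ^ ((k₁ : ℂ) - 1 - I * (p₁ : ℂ)) *
          ((1 - t : ℝ) : ℂ) ^ (-(I * (s₁₂ : ℂ)) - 1 / 2 + I * (p₁ : ℂ) + I * (p₂ : ℂ)) *
          hyp ((k₁ : ℂ) - I * (s₁₂ : ℂ) - I * (s₂ : ℂ))
            ((k₁ : ℂ) - I * (s₁₂ : ℂ) + I * (s₂ : ℂ)) (2 * (k₁ : ℂ)) t)
      (Ioo 0 (1 / 2)) volume ∧
    IntegrableOn (fun t : ℝ =>
        ((t : ℝ) : ℂ) ^ ((k₁ : ℂ) - 1 - I * (p₁ : ℂ)) *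
          ((1 - t : ℝ) : ℂ) ^ (I * (s₁₂ : ℂ) - 1 / 2 + I * (p₁ : ℂ) + I * (p₂ : ℂ)) *
          hyp ((k₁ : ℂ) + I * (s₁₂ : ℂ) + I * (s₂ : ℂ))
            ((k₁ : ℂ) + I * (s₁₂ : ℂ) - I * (s₂ : ℂ)) (1 + 2 * I * (s₁₂ : ℂ))
            ((1 - t : ℝ) : ℂ))
      (Ioo (1 / 2) 1) volume := by
  constructor
  · -- part 1
    set a := (k₁ : ℂ) - I * (s₁₂ : ℂ) - I * (s₂ : ℂ) with ha
    set b := (k₁ : ℂ) - I * (s₁₂ : ℂ) + I * (s₂ : ℂ) with hb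
    set c := 2 * (k₁ : ℂ) with hcc
    have hc : 1 ≤ c.re := by simp [hcc]; linarith
    set w₁ := (k₁ : ℂ) - 1 - I * (p₁ : ℂ) with hw₁
    set w₂ := -(I * (s₁₂ : ℂ)) - 1 / 2 + I * (p₁ : ℂ) + I * (p₂ : ℂ) with hw₂
    have hw₁re : w₁.re = k₁ - 1 := by simp [hw₁]
    have hw₂re : w₂.re = -(1/2) := by simp [hw₂]
    set M := ∑' n, hypBnd a b c n with hM
    have hM0 : 0 ≤ M := tsum_nonneg (hypBnd_nonneg a b c hc)
    have cont : ContinuousOn (fun t : ℝ =>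
        ((t : ℝ) : ℂ) ^ w₁ * ((1 - t : ℝ) : ℂ) ^ w₂ * hyp a b c ((t:ℝ):ℂ))
        (Ioo 0 (1/2)) := by
      intro t ht
      have ht0 : (0:ℝ) < t := ht.1
      have ht1 : t < 1/2 := ht.2
      refine ContinuousWithinAt.mul (ContinuousWithinAt.mul ?_ ?_) ?_
      · exact (Complex.continuous_ofReal.continuousAt.cpow continuousAt_const
          (Or.inl (by simpa using ht0))).continuousWithinAt
      · refine (ContinuousAt.cpow ?_ continuousAt_const ?_).continuousWithinAt
        · exact Complex.continuous_ofReal.continuousAt.comp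
            ((continuous_const.sub continuous_id).continuousAt)
        · left; simpa using by linarith
      · refine ContinuousWithinAt.comp (g := hyp a b c) (f := fun x : ℝ => ((x : ℝ) : ℂ))
          ((hyp_continuousOn a b c hc) _ ?_)
          Complex.continuous_ofReal.continuousWithinAt ?_
        · simp [Metric.mem_closedBall, Complex.dist_eq, abs_of_pos ht0]; linarith
        · intro x hx
          simp only [Metric.mem_closedBall, Complex.dist_eq, sub_zero, Complex.norm_real, Real.norm_eq_abs]
          rw [abs_of_pos hx.1]; linarith [hx.2]
    refine Integrable.mono' (g := fun _ => (1/2:ℝ) ^ (-(1/2):ℝ) * M)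
      (integrableOn_const measure_Ioo_lt_top.ne) 
      (cont.aestronglyMeasurable measurableSet_Ioo) ?_
    rw [ae_restrict_iff' measurableSet_Ioo]
    filter_upwards with t ht
    have ht0 : (0:ℝ) < t := ht.1
    have ht1 : t < 1/2 := ht.2
    have e1 : ‖((t:ℝ):ℂ) ^ w₁‖ = t ^ (k₁ - 1) := by
      rw [Complex.norm_cpow_eq_rpow_re_of_pos ht0, hw₁re]
    have e2 : ‖((1 - t:ℝ):ℂ) ^ w₂‖ = (1-t) ^ (-(1/2):ℝ) := by
      rw [Complex.norm_cpow_eq_rpow_re_of_pos (by linarith), hw₂re]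
    rw [norm_mul, norm_mul, e1, e2]
    have b1 : t ^ (k₁-1) ≤ 1 := Real.rpow_le_one (le_of_lt ht0) (by linarith) (by linarith)
    have b2 : (1-t) ^ (-(1/2):ℝ) ≤ (1/2:ℝ) ^ (-(1/2):ℝ) :=
      Real.rpow_le_rpow_of_nonpos (by norm_num) (by linarith) (by norm_num)
    have b3 : ‖hyp a b c ((t:ℝ):ℂ)‖ ≤ M := by
      refine hyp_bound a b c hc _ ?_
      simp only [Complex.norm_real, Real.norm_eq_abs]
      rw [abs_of_pos ht0]; linarith
    calc t ^ (k₁-1) * (1-t) ^ (-(1/2):ℝ) * ‖hyp a b c ((t:ℝ):ℂ)‖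
        ≤ 1 * ((1/2:ℝ) ^ (-(1/2):ℝ)) * M := by
          refine mul_le_mul (mul_le_mul b1 b2 (Real.rpow_nonneg (by linarith) _) (by norm_num)) b3
            (norm_nonneg _) (by positivity)
      _ = (1/2:ℝ) ^ (-(1/2):ℝ) * M := by ring
  · -- part 2
    set a := (k₁ : ℂ) + I * (s₁₂ : ℂ) + I * (s₂ : ℂ) with ha
    set b := (k₁ : ℂ) + I * (s₁₂ : ℂ) - I * (s₂ : ℂ) with hb
    set c := 1 + 2 * I * (s₁₂ : ℂ) with hcc
    have hc : 1 ≤ c.re := by simp [hcc]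
    set w₁ := (k₁ : ℂ) - 1 - I * (p₁ : ℂ) with hw₁
    set w₂ := I * (s₁₂ : ℂ) - 1 / 2 + I * (p₁ : ℂ) + I * (p₂ : ℂ) with hw₂
    have hw₁re : w₁.re = k₁ - 1 := by simp [hw₁]
    have hw₂re : w₂.re = -(1/2) := by simp [hw₂]
    set M := ∑' n, hypBnd a b c n with hM
    have hM0 : 0 ≤ M := tsum_nonneg (hypBnd_nonneg a b c hc)
    have cont : ContinuousOn (fun t : ℝ =>
        ((t : ℝ) : ℂ) ^ w₁ * ((1 - t : ℝ) : ℂ) ^ w₂ * hyp a b c ((1 - t:ℝ):ℂ))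
        (Ioo (1/2) 1) := by
      intro t ht
      have ht0 : (1/2:ℝ) < t := ht.1
      have ht1 : t < 1 := ht.2
      refine ContinuousWithinAt.mul (ContinuousWithinAt.mul ?_ ?_) ?_
      · exact (Complex.continuous_ofReal.continuousAt.cpow continuousAt_const
          (Or.inl (by simpa using by linarith))).continuousWithinAt
      · refine (ContinuousAt.cpow ?_ continuousAt_const ?_).continuousWithinAt
        · exact Complex.continuous_ofReal.continuousAt.comp
            ((continuous_const.sub continuous_id).continuousAt)
        · left; simpa using by linarith
      · refine ContinuousWithinAt.comp (g := hyp a b c) (f := fun x : ℝ => ((1 - x : ℝ) : ℂ))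
          ((hyp_continuousOn a b c hc) _ ?_)
          (Complex.continuous_ofReal.continuousAt.comp
            ((continuous_const.sub continuous_id).continuousAt)).continuousWithinAt ?_
        · simp only [Metric.mem_closedBall, Complex.dist_eq, sub_zero, Complex.norm_real, Real.norm_eq_abs]
          rw [abs_of_pos (by linarith)]; linarith
        · intro x hx
          simp only [Metric.mem_closedBall, Complex.dist_eq, sub_zero, Complex.norm_real, Real.norm_eq_abs,
            Function.comp, id]
          rw [abs_of_pos (by linarith [hx.2])]; linarith [hx.1]
    have hint : IntervalIntegrable (fun x : ℝ => x ^ (-(1/2):ℝ)) volume 0 (1/2) :=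
      intervalIntegral.intervalIntegrable_rpow' (by norm_num)
    have hint2 := (hint.comp_sub_left 1).symm
    norm_num at hint2
    have hIoo : IntegrableOn (fun x : ℝ => (1-x) ^ (-(1/2):ℝ)) (Ioo (1/2) 1) volume := by
      have h := (intervalIntegrable_iff_integrableOn_Ioo_of_le (by norm_num : (1/2:ℝ) ≤ 1)).1 hint2
      exact h
    refine Integrable.mono' (g := fun t => M * (1-t) ^ (-(1/2):ℝ)) (hIoo.const_mul M)
      (cont.aestronglyMeasurable measurableSet_Ioo) ?_
    rw [ae_restrict_iff' measurableSet_Ioo]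
    filter_upwards with t ht
    have ht0 : (1/2:ℝ) < t := ht.1
    have ht1 : t < 1 := ht.2
    have e1 : ‖((t:ℝ):ℂ) ^ w₁‖ = t ^ (k₁ - 1) := by
      rw [Complex.norm_cpow_eq_rpow_re_of_pos (by linarith), hw₁re]
    have e2 : ‖((1 - t:ℝ):ℂ) ^ w₂‖ = (1-t) ^ (-(1/2):ℝ) := by
      rw [Complex.norm_cpow_eq_rpow_re_of_pos (by linarith), hw₂re]
    rw [norm_mul, norm_mul, e1, e2]
    have b1 : t ^ (k₁-1) ≤ 1 := Real.rpow_le_one (by linarith) (by linarith) (by linarith)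
    have b3 : ‖hyp a b c ((1 - t:ℝ):ℂ)‖ ≤ M := by
      refine hyp_bound a b c hc _ ?_
      simp only [Complex.norm_real, Real.norm_eq_abs]
      rw [abs_of_pos (by linarith)]; linarith
    calc t ^ (k₁-1) * (1-t) ^ (-(1/2):ℝ) * ‖hyp a b c ((1 - t:ℝ):ℂ)‖
        ≤ 1 * (1-t) ^ (-(1/2):ℝ) * M := by
          refine mul_le_mul (mul_le_mul_of_nonneg_right b1 (Real.rpow_nonneg (by linarith) _)) b3
            (norm_nonneg _) (mul_nonneg zero_le_one (Real.rpow_nonneg (by linarith) _))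
      _ = M * (1-t) ^ (-(1/2):ℝ) := by ring
end

section
/- Let k₁ ≥ 1 be real and let s₁₂, s₂, p₁, p₂ be real. Then the complex-valued function t ↦ t^{i s₂ - 1/2 - i p₂} · (1-t)^{-i s₁₂ - 1/2 + i p₁ + i p₂} · ₂F₁(1-k₁-i s₁₂+i s₂, k₁-i s₁₂+i s₂; 1+2i s₂; t) is integrable with respect to Lebesgue measure on (0,1/2), and the function t ↦ t^{i s₂ - i p₂ - 1/2} · (1-t)^{i s₁₂ - 1/2 + i p₁ + i p₂} · ₂F₁(k₁+i s₁₂+i s₂, 1-k₁+i s₁₂+i s₂; 1+2i s₁₂; 1-t) is integrable with respect to Lebesgue measure on (1/2,1). (Convergence of the two pieces of the integral I₂(+,C,C).) -/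
open Complex Filter Set MeasureTheory
open scoped Topology

lemma asc_succ_eval {R : Type*} [CommSemiring R] (n : ℕ) (x : R) :
    (ascPochhammer R (n+1)).eval x = (ascPochhammer R n).eval x * (x + n) := by
  rw [ascPochhammer_succ_right]
  simp

lemma norm_asc_le (a : ℂ) (n : ℕ) :
    ‖(ascPochhammer ℂ n).eval a‖ ≤ (ascPochhammer ℝ n).eval (‖a‖ + 1) := by
  induction n with
  | zero => simp
  | succ n ih =>
    rw [asc_succ_eval, asc_succ_eval]
    have h1 : ‖a + (n:ℂ)‖ ≤ ‖a‖ + 1 + n := by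
      calc ‖a + (n:ℂ)‖ ≤ ‖a‖ + ‖(n:ℂ)‖ := norm_add_le _ _
      _ ≤ ‖a‖ + 1 + n := by
        simp only [Complex.norm_natCast]
        linarith
    calc ‖(ascPochhammer ℂ n).eval a * (a + n)‖
        = ‖(ascPochhammer ℂ n).eval a‖ * ‖a + (n:ℂ)‖ := norm_mul _ _
      _ ≤ (ascPochhammer ℝ n).eval (‖a‖+1) * (‖a‖ + 1 + n) := by
          apply mul_le_mul ih h1 (norm_nonneg _)
          exact le_of_lt (ascPochhammer_pos n _ (by positivity))

lemma factorial_le_norm_asc {c : ℂ} (hc : 1 ≤ c.re) (n : ℕ) :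
    (n.factorial : ℝ) ≤ ‖(ascPochhammer ℂ n).eval c‖ := by
  induction n with
  | zero => simp
  | succ n ih =>
    rw [asc_succ_eval, norm_mul, Nat.factorial_succ]
    have h1 : (n : ℝ) + 1 ≤ ‖c + (n:ℂ)‖ := by
      have : (c + (n:ℂ)).re = c.re + n := by simp
      calc (n:ℝ) + 1 ≤ (c + (n:ℂ)).re := by rw [this]; linarith
      _ ≤ ‖c + (n:ℂ)‖ := Complex.re_le_norm _
    push_cast
    calc ((n:ℝ)+1) * n.factorial ≤ ‖c + (n:ℂ)‖ * ‖(ascPochhammer ℂ n).eval c‖ :=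
          mul_le_mul h1 ih (by positivity) (norm_nonneg _)
      _ = _ := (mul_comm _ _)

noncomputable def majorant (A B : ℝ) (n : ℕ) : ℝ :=
  (ascPochhammer ℝ n).eval A * (ascPochhammer ℝ n).eval B /
    ((n.factorial : ℝ) * (n.factorial : ℝ)) * (1/2) ^ n

lemma majorant_pos {A B : ℝ} (hA : 0 < A) (hB : 0 < B) (n : ℕ) : 0 < majorant A B n := by
  unfold majorant
  have := ascPochhammer_pos n A hA
  have := ascPochhammer_pos n B hB
  have := Nat.factorial_pos n
  positivity

lemma majorant_summable {A B : ℝ} (hA : 0 < A) (hB : 0 < B) : Summable (majorant A B) := by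
  apply summable_of_ratio_test_tendsto_lt_one (l := 1/2) (by norm_num)
  · exact Eventually.of_forall fun n => (majorant_pos hA hB n).ne'
  · have key : ∀ n : ℕ, ‖majorant A B (n+1)‖ / ‖majorant A B n‖ =
        ((A + n)/(n+1)) * ((B + n)/(n+1)) * (1/2) := by
      intro n
      rw [Real.norm_of_nonneg (majorant_pos hA hB (n+1)).le,
        Real.norm_of_nonneg (majorant_pos hA hB n).le]
      unfold majorant
      rw [asc_succ_eval, asc_succ_eval, Nat.factorial_succ]
      have h1 : (0:ℝ) < (ascPochhammer ℝ n).eval A := ascPochhammer_pos n A hA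
      have h2 : (0:ℝ) < (ascPochhammer ℝ n).eval B := ascPochhammer_pos n B hB
      have h3 : (0:ℝ) < (n.factorial : ℝ) := by exact_mod_cast Nat.factorial_pos n
      have h4 : ((n:ℝ)+1) ≠ 0 := by positivity
      push_cast
      field_simp
      ring
    simp_rw [key]
    have hlim : ∀ C : ℝ, Tendsto (fun n : ℕ => (C + n)/(n+1)) atTop (𝓝 1) := by
      intro C
      have : (fun n : ℕ => (C + n)/(n+1)) = fun n : ℕ => (C - 1) * (1/(n+1)) + 1 := by
        funext n
        have h4 : ((n:ℝ)+1) ≠ 0 := by positivity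
        field_simp
        ring
      rw [this]
      have h := (tendsto_one_div_add_atTop_nhds_zero_nat.const_mul (C - 1)).add
        (tendsto_const_nhds (x := (1:ℝ)))
      simpa using h
    have := ((hlim A).mul (hlim B)).mul (tendsto_const_nhds (x := (1/2:ℝ)))
    simpa using this

lemma hypTerm_norm_le {a b c z : ℂ} (hc : 1 ≤ c.re) (hz : ‖z‖ ≤ 1/2) (n : ℕ) :
    ‖hypTerm a b c z n‖ ≤ majorant (‖a‖+1) (‖b‖+1) n := by
  unfold hypTerm majorant
  have hfac : (0:ℝ) < (n.factorial : ℝ) := by exact_mod_cast Nat.factorial_pos n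
  have hA : (0:ℝ) ≤ (ascPochhammer ℝ n).eval (‖a‖+1) :=
    (ascPochhammer_pos n _ (by positivity)).le
  have hB : (0:ℝ) ≤ (ascPochhammer ℝ n).eval (‖b‖+1) :=
    (ascPochhammer_pos n _ (by positivity)).le
  rw [norm_mul, norm_div, norm_mul, norm_mul, norm_pow]
  have hnum : ‖(ascPochhammer ℂ n).eval a‖ * ‖(ascPochhammer ℂ n).eval b‖ ≤
      (ascPochhammer ℝ n).eval (‖a‖+1) * (ascPochhammer ℝ n).eval (‖b‖+1) :=
    mul_le_mul (norm_asc_le a n) (norm_asc_le b n) (norm_nonneg _) (hA.trans (by linarith [norm_asc_le a n, norm_nonneg ((ascPochhammer ℂ n).eval a)]))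
  have hden : (n.factorial : ℝ) * (n.factorial : ℝ) ≤
      ‖(ascPochhammer ℂ n).eval c‖ * ‖((n.factorial : ℕ) : ℂ)‖ := by
    rw [Complex.norm_natCast]
    exact mul_le_mul (factorial_le_norm_asc hc n) le_rfl hfac.le
      (hfac.le.trans (factorial_le_norm_asc hc n))
  have hdpos : (0:ℝ) < (n.factorial : ℝ) * (n.factorial : ℝ) := by positivity
  exact mul_le_mul (div_le_div₀ (mul_nonneg hA hB) hnum hdpos hden)
    (pow_le_pow_left₀ (norm_nonneg z) hz n) (pow_nonneg (norm_nonneg z) n)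
    (div_nonneg (mul_nonneg hA hB) hdpos.le)

lemma hypTerm_summable {a b c z : ℂ} (hc : 1 ≤ c.re) (hz : ‖z‖ ≤ 1/2) :
    Summable (hypTerm a b c z) := by
  apply Summable.of_norm
  exact Summable.of_nonneg_of_le (fun n => norm_nonneg _) (hypTerm_norm_le hc hz)
    (majorant_summable (by positivity) (by positivity))

lemma hyp_norm_le {a b c z : ℂ} (hc : 1 ≤ c.re) (hz : ‖z‖ ≤ 1/2) :
    ‖hyp a b c z‖ ≤ ∑' n, majorant (‖a‖+1) (‖b‖+1) n := by
  have hmsum : Summable (majorant (‖a‖+1) (‖b‖+1)) :=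
    majorant_summable (by positivity) (by positivity)
  have hnsum : Summable fun n => ‖hypTerm a b c z n‖ :=
    Summable.of_nonneg_of_le (fun n => norm_nonneg _) (hypTerm_norm_le hc hz) hmsum
  calc ‖hyp a b c z‖ ≤ ∑' n, ‖hypTerm a b c z n‖ := norm_tsum_le_tsum_norm hnsum
    _ ≤ _ := Summable.tsum_le_tsum (hypTerm_norm_le hc hz) hnsum hmsum

lemma hyp_comp_aesm {a b c : ℂ} {s : Set ℝ} (hs : MeasurableSet s) {φ : ℝ → ℂ}
    (hφ : Continuous φ) (hc : 1 ≤ c.re) (hφs : ∀ t ∈ s, ‖φ t‖ ≤ 1/2) :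
    AEStronglyMeasurable (fun t => hyp a b c (φ t)) (volume.restrict s) := by
  apply aestronglyMeasurable_of_tendsto_ae (u := atTop)
    (f := fun N t => ∑ n ∈ Finset.range N, hypTerm a b c (φ t) n)
  · intro N
    apply Continuous.aestronglyMeasurable
    apply continuous_finset_sum
    intro n _
    unfold hypTerm
    exact continuous_const.mul ((hφ.pow n))
  · filter_upwards [ae_restrict_mem hs] with t ht
    exact (hypTerm_summable hc (hφs t ht)).hasSum.tendsto_sum_nat

lemma integrableOn_rpow_half : IntegrableOn (fun t : ℝ => t ^ (-(1/2) : ℝ))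
    (Ioo (0:ℝ) (1/2)) volume := by
  have h := intervalIntegral.intervalIntegrable_rpow' (a := (0:ℝ)) (b := 1/2)
    (r := -(1/2)) (by norm_num)
  rw [intervalIntegrable_iff_integrableOn_Ioo_of_le (by norm_num)] at h
  exact h

lemma piece (w1 w2 a b c : ℂ) (hw1 : w1.re = -(1/2)) (hw2 : w2.re = -(1/2)) (hc : 1 ≤ c.re) :
    IntegrableOn (fun t : ℝ => ((t : ℝ) : ℂ) ^ w1 * ((1 - t : ℝ) : ℂ) ^ w2 *
      hyp a b c ((t : ℝ) : ℂ)) (Ioo 0 (1/2)) volume := by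
  set M : ℝ := ∑' n, majorant (‖a‖+1) (‖b‖+1) n with hM
  have hM0 : 0 ≤ M := tsum_nonneg fun n => (majorant_pos (by positivity) (by positivity) n).le
  have hφs : ∀ t ∈ Ioo (0:ℝ) (1/2), ‖((t:ℝ):ℂ)‖ ≤ 1/2 := by
    intro t ht
    rw [Complex.norm_real, Real.norm_of_nonneg ht.1.le]
    exact ht.2.le
  apply Integrable.mono' (g := fun t : ℝ => (2*M) * t ^ (-(1/2) : ℝ))
  · exact (integrableOn_rpow_half.const_mul _)
  · apply AEStronglyMeasurable.mul
    apply AEStronglyMeasurable.mul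
    · apply ContinuousOn.aestronglyMeasurable _ measurableSet_Ioo
      intro t ht
      apply ContinuousAt.continuousWithinAt
      exact (continuousAt_cpow_const
        (Or.inl (by simpa using ht.1))).comp Complex.continuous_ofReal.continuousAt
    · apply ContinuousOn.aestronglyMeasurable _ measurableSet_Ioo
      intro t ht
      apply ContinuousAt.continuousWithinAt
      have h1t : (0:ℝ) < 1 - t := by
        have := ht.2; simp only [mem_Ioo] at ht; linarith [ht.2]
      exact (continuousAt_cpow_const (Or.inl (by simpa using h1t))).comp
        (Complex.continuous_ofReal.continuousAt.comp
          ((continuous_const.sub continuous_id).continuousAt))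
    · exact hyp_comp_aesm measurableSet_Ioo Complex.continuous_ofReal hc hφs
  · filter_upwards [ae_restrict_mem measurableSet_Ioo] with t ht
    have ht1 : (0:ℝ) < t := ht.1
    have ht2 : t < 1/2 := ht.2
    have h1t : (0:ℝ) < 1 - t := by linarith
    have e1 : ‖((t:ℝ):ℂ) ^ w1‖ = t ^ (-(1/2):ℝ) := by
      rw [Complex.norm_cpow_eq_rpow_re_of_pos ht1, hw1]
    have e2 : ‖((1-t:ℝ):ℂ) ^ w2‖ = (1-t) ^ (-(1/2):ℝ) := by
      rw [Complex.norm_cpow_eq_rpow_re_of_pos h1t, hw2]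
    have e2' : (1-t) ^ (-(1/2):ℝ) ≤ 2 := by
      calc (1-t) ^ (-(1/2):ℝ) ≤ (1/2 : ℝ) ^ (-(1/2):ℝ) :=
            Real.rpow_le_rpow_of_nonpos (by norm_num) (by linarith) (by norm_num)
        _ ≤ 2 := by
            have h0 : (1/2:ℝ) ≤ (1/2:ℝ) ^ ((1/2):ℝ) := by
              calc (1/2:ℝ) = (1/2:ℝ)^(1:ℝ) := (Real.rpow_one _).symm
                _ ≤ (1/2:ℝ)^((1/2):ℝ) :=
                  Real.rpow_le_rpow_of_exponent_ge (by norm_num) (by norm_num) (by norm_num)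
            rw [Real.rpow_neg (by norm_num)]
            calc ((1/2:ℝ) ^ ((1/2):ℝ))⁻¹ ≤ ((1/2:ℝ))⁻¹ := by
                  apply inv_anti₀ (by norm_num) h0
              _ = 2 := by norm_num
    have e3 : ‖hyp a b c ((t:ℝ):ℂ)‖ ≤ M := hyp_norm_le hc (hφs t ht)
    rw [norm_mul, norm_mul, e1, e2]
    have hrp : (0:ℝ) ≤ t ^ (-(1/2):ℝ) := Real.rpow_nonneg ht1.le _
    calc t ^ (-(1/2):ℝ) * (1-t) ^ (-(1/2):ℝ) * ‖hyp a b c ((t:ℝ):ℂ)‖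
        ≤ t ^ (-(1/2):ℝ) * 2 * M := by
          apply mul_le_mul (mul_le_mul le_rfl e2' (Real.rpow_nonneg h1t.le _) hrp) e3
            (norm_nonneg _)
          positivity
      _ = (2*M) * t ^ (-(1/2):ℝ) := by ring

lemma piece2 (w1 w2 a b c : ℂ) (hw1 : w1.re = -(1/2)) (hw2 : w2.re = -(1/2)) (hc : 1 ≤ c.re) :
    IntegrableOn (fun t : ℝ => ((t : ℝ) : ℂ) ^ w1 * ((1 - t : ℝ) : ℂ) ^ w2 *
      hyp a b c ((1 - t : ℝ) : ℂ)) (Ioo (1/2) 1) volume := by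
  have hmp : MeasurePreserving (fun x : ℝ => 1 - x) volume volume :=
    Measure.measurePreserving_sub_left volume 1
  have hemb : MeasurableEmbedding (fun x : ℝ => 1 - x) :=
    (Homeomorph.subLeft (1:ℝ)).measurableEmbedding
  rw [← hmp.integrableOn_comp_preimage hemb]
  have hpre : (fun x : ℝ => 1 - x) ⁻¹' (Ioo (1/2) 1) = Ioo 0 (1/2) := by
    ext x
    simp only [mem_preimage, mem_Ioo]
    constructor <;> intro h <;> exact ⟨by linarith [h.1, h.2], by linarith [h.1, h.2]⟩
  rw [hpre]
  refine IntegrableOn.congr_fun (piece w2 w1 a b c hw2 hw1 hc) (fun t ht => ?_)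
    measurableSet_Ioo
  simp only [Function.comp]
  rw [show (1 - (1 - t) : ℝ) = t by ring]
  ring

/-- Convergence of the two pieces of the integral `I₂(+,C,C)`. -/
theorem integral_PCC_I2_integrable (k₁ s₁₂ s₂ p₁ p₂ : ℝ) (h1 : 1 ≤ k₁) :
    IntegrableOn (fun t : ℝ =>
        ((t : ℝ) : ℂ) ^ (I * (s₂ : ℂ) - 1 / 2 - I * (p₂ : ℂ)) *
          ((1 - t : ℝ) : ℂ) ^ (-(I * (s₁₂ : ℂ)) - 1 / 2 + I * (p₁ : ℂ) + I * (p₂ : ℂ)) *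
          hyp (1 - k₁ - I * (s₁₂ : ℂ) + I * (s₂ : ℂ))
            ((k₁ : ℂ) - I * (s₁₂ : ℂ) + I * (s₂ : ℂ)) (1 + 2 * I * (s₂ : ℂ)) t)
      (Ioo 0 (1 / 2)) volume ∧
    IntegrableOn (fun t : ℝ =>
        ((t : ℝ) : ℂ) ^ (I * (s₂ : ℂ) - I * (p₂ : ℂ) - 1 / 2) *
          ((1 - t : ℝ) : ℂ) ^ (I * (s₁₂ : ℂ) - 1 / 2 + I * (p₁ : ℂ) + I * (p₂ : ℂ)) *
          hyp ((k₁ : ℂ) + I * (s₁₂ : ℂ) + I * (s₂ : ℂ))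
            (1 - k₁ + I * (s₁₂ : ℂ) + I * (s₂ : ℂ)) (1 + 2 * I * (s₁₂ : ℂ))
            ((1 - t : ℝ) : ℂ))
      (Ioo (1 / 2) 1) volume := by
  constructor
  · exact piece _ _ _ _ _ (by simp) (by simp) (by simp)
  · exact piece2 _ _ _ _ _ (by simp) (by simp) (by simp)
end
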